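/- (Jacobian of the matrix power function) Let n ≥ 1 and let F : ℍ^{N×N} → ℍ^{N×N} be F(Q) = Qⁿ. Then for every Q ∈ ℍ^{N×N} the GHR Jacobians satisfy D_Q(Qⁿ) = Σ_{m=1}^{n} (I_N ⊗ Q)^{n−m} · (Re(Q^{m−1})ᵀ ⊗ I_N) and D_{Q*}(Qⁿ) = −½ Σ_{m=1}^{n} (I_N ⊗ Q)^{n−m} · ((Q^{m−1})^H ⊗ I_N), where Re applies entrywise, ᵀ is the transpose, ^H the conjugate transpose, and ⊗ the Kronecker product of quaternion matrices (indexed by pairs, consistent with column-stacking vec ordering). -/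

import Mathlib

open scoped Quaternion
open Matrix

noncomputable section

/-- The imaginary unit `i` of the quaternions. -/
def qI : ℍ[ℝ] := ⟨0, 1, 0, 0⟩
/-- The imaginary unit `j` of the quaternions. -/
def qJ : ℍ[ℝ] := ⟨0, 0, 1, 0⟩
/-- The imaginary unit `k` of the quaternions. -/
def qK : ℍ[ℝ] := ⟨0, 0, 0, 1⟩

/-- The `N × S` quaternion matrix with entry `d` at position `(n,s)` and `0` elsewhere. -/
def single {N S : ℕ} (n : Fin N) (s : Fin S) (d : ℍ[ℝ]) : Fin N → Fin S → ℍ[ℝ] :=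
  Pi.single n (Pi.single s d)

/-- Real directional (Fréchet) derivative of a scalar function of a matrix variable, in the
direction `d` at the single entry `(n,s)` (the other entries held fixed). -/
def pd {N S : ℕ} (f : (Fin N → Fin S → ℍ[ℝ]) → ℍ[ℝ]) (Q : Fin N → Fin S → ℍ[ℝ])
    (n : Fin N) (s : Fin S) (d : ℍ[ℝ]) : ℍ[ℝ] :=
  fderiv ℝ f Q (_root_.single n s d)

/-- Left GHR derivative `∂f/∂q_{ns}` of a scalar function `f` with respect to the entry
`q_{ns}` of its matrix argument. -/
def ghrE {N S : ℕ} (f : (Fin N → Fin S → ℍ[ℝ]) → ℍ[ℝ])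
    (Q : Fin N → Fin S → ℍ[ℝ]) (n : Fin N) (s : Fin S) : ℍ[ℝ] :=
  (1 / 4 : ℝ) • (pd f Q n s 1 - pd f Q n s qI * qI - pd f Q n s qJ * qJ - pd f Q n s qK * qK)

/-- Conjugate left GHR derivative `∂f/∂q_{ns}*`. -/
def ghrEStar {N S : ℕ} (f : (Fin N → Fin S → ℍ[ℝ]) → ℍ[ℝ])
    (Q : Fin N → Fin S → ℍ[ℝ]) (n : Fin N) (s : Fin S) : ℍ[ℝ] :=
  (1 / 4 : ℝ) • (pd f Q n s 1 + pd f Q n s qI * qI + pd f Q n s qJ * qJ + pd f Q n s qK * qK)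

/-- The GHR Jacobian `D_Q F(Q)` (column-stacking `vec` ordering). -/
def ghrJac {N S M P : ℕ} (F : (Fin N → Fin S → ℍ[ℝ]) → (Fin M → Fin P → ℍ[ℝ]))
    (Q : Fin N → Fin S → ℍ[ℝ]) : Matrix (Fin M × Fin P) (Fin N × Fin S) ℍ[ℝ] :=
  Matrix.of fun mp ns => ghrE (fun X => F X mp.1 mp.2) Q ns.1 ns.2

/-- The conjugate GHR Jacobian `D_{Q*} F(Q)`. -/
def ghrJacStar {N S M P : ℕ} (F : (Fin N → Fin S → ℍ[ℝ]) → (Fin M → Fin P → ℍ[ℝ]))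
    (Q : Fin N → Fin S → ℍ[ℝ]) : Matrix (Fin M × Fin P) (Fin N × Fin S) ℍ[ℝ] :=
  Matrix.of fun mp ns => ghrEStar (fun X => F X mp.1 mp.2) Q ns.1 ns.2

/-- The Kronecker product (column-stacking `vec` convention):
`(A ⊗ B)_{(m,p),(r,s)} = A_{p s} B_{m r}`. -/
def kron {N : ℕ} (A B : Matrix (Fin N) (Fin N) ℍ[ℝ]) :
    Matrix (Fin N × Fin N) (Fin N × Fin N) ℍ[ℝ] :=
  Matrix.of fun mp rs => A mp.2 rs.2 * B mp.1 rs.1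

/-- The entrywise real part of a quaternion matrix (as a quaternion matrix). -/
def reMat {N : ℕ} (M : Matrix (Fin N) (Fin N) ℍ[ℝ]) : Matrix (Fin N) (Fin N) ℍ[ℝ] :=
  Matrix.of fun a b => ((M a b).re : ℍ[ℝ])


/-! ### Auxiliary lemmas -/

lemma halfmul (x : ℍ[ℝ]) : -(1/2 : ℍ[ℝ]) * x = ((-(1/2):ℝ)) • x := by
  have h2 : ((2:ℝ):ℍ[ℝ]) = 2 := by exact_mod_cast rfl
  rw [← Quaternion.coe_mul_eq_smul, Quaternion.coe_neg, Quaternion.coe_div,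
    Quaternion.coe_one, h2]

lemma scalar1 (p q : ℍ[ℝ]) :
    (1/4:ℝ) • (p * 1 * q - p * qI * q * qI - p * qJ * q * qJ - p * qK * q * qK)
      = p * ((q.re : ℝ) : ℍ[ℝ]) := by
  ext <;> simp [Quaternion.re_mul, Quaternion.imI_mul, Quaternion.imJ_mul, Quaternion.imK_mul] <;> simp [qI, qJ, qK] <;> ring

lemma scalar2 (p q : ℍ[ℝ]) :
    (1/4:ℝ) • (p * 1 * q + p * qI * q * qI + p * qJ * q * qJ + p * qK * q * qK)
      = ((-(1/2):ℝ)) • (p * star q) := by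
  ext <;> simp [Quaternion.re_mul, Quaternion.imI_mul, Quaternion.imJ_mul, Quaternion.imK_mul] <;> simp [qI, qJ, qK] <;> ring

def powDerivL {N : ℕ} (n : ℕ) (Q : Fin N → Fin N → ℍ[ℝ]) (a b : Fin N) :
    (Fin N → Fin N → ℍ[ℝ]) →ₗ[ℝ] ℍ[ℝ] where
  toFun H := ∑ m ∈ Finset.range n,
    ((Matrix.of Q) ^ (n - 1 - m) * Matrix.of H * (Matrix.of Q) ^ m) a b
  map_add' H H' := by
    simp only [Matrix.mul_apply, Matrix.of_apply]
    simp only [Pi.add_apply, mul_add, add_mul, Finset.sum_add_distrib]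
  map_smul' c H := by
    simp only [Matrix.mul_apply, Matrix.of_apply, RingHom.id_apply]
    simp only [Pi.smul_apply, mul_smul_comm, smul_mul_assoc, ← Finset.smul_sum]

def powDeriv {N : ℕ} (n : ℕ) (Q : Fin N → Fin N → ℍ[ℝ]) (a b : Fin N) :
    (Fin N → Fin N → ℍ[ℝ]) →L[ℝ] ℍ[ℝ] :=
  LinearMap.toContinuousLinearMap (powDerivL n Q a b)

@[simp] lemma powDeriv_apply {N : ℕ} (n : ℕ) (Q : Fin N → Fin N → ℍ[ℝ]) (a b : Fin N) (H) :
    powDeriv n Q a b H = ∑ m ∈ Finset.range n,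
      ((Matrix.of Q) ^ (n - 1 - m) * Matrix.of H * (Matrix.of Q) ^ m) a b := rfl

def projCLM {N : ℕ} (c b : Fin N) : (Fin N → Fin N → ℍ[ℝ]) →L[ℝ] ℍ[ℝ] :=
  LinearMap.toContinuousLinearMap
    { toFun := fun X => X c b
      map_add' := fun _ _ => rfl
      map_smul' := fun _ _ => rfl }

lemma hasFDeriv_pow {N : ℕ} (n : ℕ) (Q : Fin N → Fin N → ℍ[ℝ]) (a b : Fin N) :
    HasFDerivAt (fun X : Fin N → Fin N → ℍ[ℝ] => ((Matrix.of X) ^ n) a b)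
      (powDeriv n Q a b) Q := by
  induction n generalizing a b with
  | zero =>
      have h0 : powDeriv 0 Q a b = 0 := by
        refine ContinuousLinearMap.ext fun H => ?_
        simp [powDeriv_apply]
      rw [h0]
      exact (hasFDerivAt_const ((1 : Matrix (Fin N) (Fin N) ℍ[ℝ]) a b) Q).congr_of_eventuallyEq
        (by filter_upwards with X; simp [pow_zero])
  | succ n ih =>
      have h : HasFDerivAt (fun X : Fin N → Fin N → ℍ[ℝ] => ∑ c, ((Matrix.of X) ^ n) a c * X c b)
          (∑ c, (((Matrix.of Q) ^ n) a c • projCLM c b + (powDeriv n Q a c).smulRight (Q c b))) Q := by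
        apply HasFDerivAt.fun_sum
        intro c _
        exact (ih a c).mul' ((projCLM c b).hasFDerivAt)
      have heq : (∑ c, (((Matrix.of Q) ^ n) a c • projCLM c b + (powDeriv n Q a c).smulRight (Q c b)))
          = powDeriv (n+1) Q a b := by
        refine ContinuousLinearMap.ext fun H => ?_
        simp only [ContinuousLinearMap.sum_apply, ContinuousLinearMap.add_apply,
          ContinuousLinearMap.smul_apply, ContinuousLinearMap.smulRight_apply,
          powDeriv_apply, smul_eq_mul]
        have hproj : ∀ c, projCLM (N := N) c b H = H c b := fun _ => rfl
        simp only [hproj]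
        rw [Finset.sum_add_distrib, Finset.sum_range_succ', add_comm]
        congr 1
        · have : ∀ c, (∑ m ∈ Finset.range n,
              ((Matrix.of Q) ^ (n - 1 - m) * Matrix.of H * (Matrix.of Q) ^ m) a c) * Q c b
              = ∑ m ∈ Finset.range n,
              ((Matrix.of Q) ^ (n - 1 - m) * Matrix.of H * (Matrix.of Q) ^ m) a c * Q c b :=
            fun c => Finset.sum_mul _ _ _
          simp only [this]
          rw [Finset.sum_comm]
          refine Finset.sum_congr rfl fun m hm => ?_
          have h1 : (n + 1 - 1 - (m + 1)) = n - 1 - m := by omega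
          rw [h1, pow_succ, ← Matrix.mul_assoc, Matrix.mul_apply]
          rfl
        · rw [Nat.sub_zero, pow_zero, Matrix.mul_one, Matrix.mul_apply]
          rfl
      rw [← heq]
      refine h.congr_of_eventuallyEq ?_
      filter_upwards with X
      rw [pow_succ, Matrix.mul_apply]
      rfl

lemma sandwich_single {N : ℕ} (P R : Matrix (Fin N) (Fin N) ℍ[ℝ]) (a b r s : Fin N) (d : ℍ[ℝ]) :
    (P * Matrix.of (_root_.single r s d) * R) a b = P a r * d * R s b := by
  simp [Matrix.mul_apply, _root_.single, Pi.single_apply, ite_apply, ite_mul, mul_ite,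
    Finset.sum_ite_eq, Finset.sum_ite_eq', mul_assoc]

lemma pd_pow {N : ℕ} (n : ℕ) (Q : Fin N → Fin N → ℍ[ℝ]) (a b r s : Fin N) (d : ℍ[ℝ]) :
    pd (fun X => ((Matrix.of X) ^ n) a b) Q r s d
      = ∑ m ∈ Finset.range n,
        ((Matrix.of Q) ^ (n - 1 - m)) a r * d * ((Matrix.of Q) ^ m) s b := by
  unfold pd
  rw [(hasFDeriv_pow n Q a b).fderiv, powDeriv_apply]
  exact Finset.sum_congr rfl fun m _ => sandwich_single _ _ _ _ _ _ _

lemma kron_one_one {N : ℕ} : kron (1 : Matrix (Fin N) (Fin N) ℍ[ℝ]) 1 = 1 := by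
  refine Matrix.ext fun ⟨a,b⟩ ⟨r,s⟩ => ?_
  by_cases h1 : b = s <;> by_cases h2 : a = r <;>
    simp [kron, Matrix.one_apply, Prod.ext_iff, h1, h2]

lemma kron_one_mul {N : ℕ} (A B : Matrix (Fin N) (Fin N) ℍ[ℝ]) :
    kron 1 A * kron 1 B = kron 1 (A * B) := by
  refine Matrix.ext fun ⟨a,b⟩ ⟨r,s⟩ => ?_
  rw [Matrix.mul_apply, Fintype.sum_prod_type]
  simp [kron, Matrix.mul_apply, Matrix.one_apply, ite_mul, mul_ite,
    Finset.sum_ite_eq, Finset.sum_ite_eq']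

lemma kron_one_pow {N : ℕ} (A : Matrix (Fin N) (Fin N) ℍ[ℝ]) (k : ℕ) :
    (kron 1 A) ^ k = kron 1 (A ^ k) := by
  induction k with
  | zero => simpa using kron_one_one.symm
  | succ k ih => rw [pow_succ, pow_succ, ih, kron_one_mul]

lemma kron_entry_mul {N : ℕ} (P C : Matrix (Fin N) (Fin N) ℍ[ℝ]) (a b r s : Fin N) :
    (kron 1 P * kron C 1) (a, b) (r, s) = P a r * C b s := by
  rw [Matrix.mul_apply, Fintype.sum_prod_type]
  simp [kron, Matrix.one_apply, ite_mul, mul_ite,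
    Finset.sum_ite_eq, Finset.sum_ite_eq']

/-- **Jacobians of the matrix power function** `F(Q) = Qⁿ` (`n ≥ 1`):
`D_Q(Qⁿ) = Σ_{m=1}^{n} (I_N ⊗ Q)^{n−m} (Re(Q^{m−1})ᵀ ⊗ I_N)` and
`D_{Q*}(Qⁿ) = −½ Σ_{m=1}^{n} (I_N ⊗ Q)^{n−m} ((Q^{m−1})^H ⊗ I_N)`. -/
theorem ghr_jacobian_matrix_power {N : ℕ} (n : ℕ) (hn : 1 ≤ n)
    (Q : Fin N → Fin N → ℍ[ℝ]) :
    ghrJac (fun X (a b : Fin N) => ((Matrix.of X) ^ n) a b) Q =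
      ∑ m ∈ Finset.Icc 1 n,
        (kron 1 (Matrix.of Q)) ^ (n - m) * kron ((reMat ((Matrix.of Q) ^ (m - 1)))ᵀ) 1
    ∧ ghrJacStar (fun X (a b : Fin N) => ((Matrix.of X) ^ n) a b) Q =
      -(1 / 2 : ℍ[ℝ]) • ∑ m ∈ Finset.Icc 1 n,
        (kron 1 (Matrix.of Q)) ^ (n - m) * kron (((Matrix.of Q) ^ (m - 1))ᴴ) 1 := by
  constructor
  · refine Matrix.ext fun ⟨a,b⟩ ⟨r,s⟩ => ?_
    have hRHS : (∑ m ∈ Finset.Icc 1 n,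
        (kron 1 (Matrix.of Q)) ^ (n - m) * kron ((reMat ((Matrix.of Q) ^ (m - 1)))ᵀ) 1) (a,b) (r,s)
        = ∑ k ∈ Finset.range n,
          ((Matrix.of Q) ^ (n - 1 - k)) a r * ((((Matrix.of Q) ^ k) s b).re : ℍ[ℝ]) := by
      rw [Matrix.sum_apply, show Finset.Icc 1 n = Finset.Ico 1 (n+1) from (Finset.Ico_add_one_right_eq_Icc 1 n).symm,
        Finset.sum_Ico_eq_sum_range]
      simp only [Nat.add_sub_cancel]
      refine Finset.sum_congr rfl fun k hk => ?_
      rw [kron_one_pow, kron_entry_mul]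
      have e1 : n - (1+k) = n - 1 - k := by omega
      have e2 : 1 + k - 1 = k := by omega
      rw [e1, e2]
      rfl
    show ghrE (fun X => ((Matrix.of X) ^ n) a b) Q r s = _
    rw [hRHS]
    unfold ghrE
    rw [pd_pow, pd_pow, pd_pow, pd_pow, Finset.sum_mul, Finset.sum_mul, Finset.sum_mul,
      ← Finset.sum_sub_distrib, ← Finset.sum_sub_distrib, ← Finset.sum_sub_distrib,
      Finset.smul_sum]
    exact Finset.sum_congr rfl fun k _ => scalar1 _ _
  · refine Matrix.ext fun ⟨a,b⟩ ⟨r,s⟩ => ?_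
    have hRHS : (∑ m ∈ Finset.Icc 1 n,
        (kron 1 (Matrix.of Q)) ^ (n - m) * kron (((Matrix.of Q) ^ (m - 1))ᴴ) 1) (a,b) (r,s)
        = ∑ k ∈ Finset.range n,
          ((Matrix.of Q) ^ (n - 1 - k)) a r * star (((Matrix.of Q) ^ k) s b) := by
      rw [Matrix.sum_apply, show Finset.Icc 1 n = Finset.Ico 1 (n+1) from (Finset.Ico_add_one_right_eq_Icc 1 n).symm,
        Finset.sum_Ico_eq_sum_range]
      simp only [Nat.add_sub_cancel]
      refine Finset.sum_congr rfl fun k hk => ?_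
      rw [kron_one_pow, kron_entry_mul]
      have e1 : n - (1+k) = n - 1 - k := by omega
      have e2 : 1 + k - 1 = k := by omega
      rw [e1, e2, Matrix.conjTranspose_apply]
    show ghrEStar (fun X => ((Matrix.of X) ^ n) a b) Q r s = _
    rw [Matrix.smul_apply, smul_eq_mul, halfmul, hRHS, Finset.smul_sum]
    unfold ghrEStar
    rw [pd_pow, pd_pow, pd_pow, pd_pow, Finset.sum_mul, Finset.sum_mul, Finset.sum_mul,
      ← Finset.sum_add_distrib, ← Finset.sum_add_distrib, ← Finset.sum_add_distrib,
      Finset.smul_sum]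
    exact Finset.sum_congr rfl fun k _ => scalar2 _ _
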